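/- For the univariate case: if Z ~ ESN(0, 1, α, τ) with density f(z) = φ(z)Φ(τ√(1+α²)+αz)/Φ(τ), and g(x) = ατ + √(α²+1)·x, then for any function f: ℝ → ℝ such that the integrals exist, E[f(Z)·ζ₁(α₀ + αZ)] = (ζ₁(τ)/√(α²+1))·E[f(g⁻¹(V))], where V ~ N(0,1), α₀ = τ√(1+α²), and ζ₁(x) = φ(x)/Φ(x). -/

import Mathlib

open MeasureTheory Real

noncomputable def phi (x : ℝ) : ℝ := (Real.sqrt (2 * Real.pi))⁻¹ * Real.exp (-x ^ 2 / 2)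

noncomputable def Phi (x : ℝ) : ℝ := ∫ t in Set.Iic x, phi t

noncomputable def zeta1 (x : ℝ) : ℝ := phi x / Phi x

/-- ESN(0,1,α,τ) density -/
noncomputable def esnPdf (α τ z : ℝ) : ℝ :=
  phi z * Phi (τ * Real.sqrt (1 + α ^ 2) + α * z) / Phi τ

lemma phi_pos (x : ℝ) : 0 < phi x := by unfold phi; positivity

lemma phi_eq : phi = ProbabilityTheory.gaussianPDFReal 0 1 := by
  ext x
  simp [phi, ProbabilityTheory.gaussianPDFReal]

lemma integrable_phi : Integrable phi := by
  rw [phi_eq]; exact ProbabilityTheory.integrable_gaussianPDFReal 0 1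

lemma Phi_pos (x : ℝ) : 0 < Phi x := by
  unfold Phi
  rw [setIntegral_pos_iff_support_of_nonneg_ae
    (Filter.Eventually.of_forall fun t => (phi_pos t).le) integrable_phi.integrableOn]
  have : Function.support phi = Set.univ := by
    ext t; simp [Function.support, (phi_pos t).ne']
  rw [this, Set.univ_inter]
  simp [Real.volume_Iic]

lemma phi_mul_phi (α τ z : ℝ) :
    phi z * phi (τ * Real.sqrt (1 + α ^ 2) + α * z) =
      phi τ * phi (Real.sqrt (1 + α ^ 2) * z + α * τ) := by
  have hs : Real.sqrt (1 + α ^ 2) ^ 2 = 1 + α ^ 2 :=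
    Real.sq_sqrt (by positivity)
  unfold phi
  rw [mul_mul_mul_comm, mul_mul_mul_comm _ (Real.exp _), ← Real.exp_add, ← Real.exp_add]
  congr 1
  rw [← add_div, ← add_div]
  congr 1
  ring_nf
  nlinarith [hs]

theorem esn_univariate_factorization (α τ : ℝ) (f : ℝ → ℝ) (hf : Measurable f)
    (hint1 : Integrable (fun z : ℝ =>
      f z * zeta1 (τ * Real.sqrt (1 + α ^ 2) + α * z) * esnPdf α τ z))
    (hint2 : Integrable (fun v : ℝ =>
      f ((v - α * τ) / Real.sqrt (1 + α ^ 2)) * phi v)) :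
    ∫ z : ℝ, f z * zeta1 (τ * Real.sqrt (1 + α ^ 2) + α * z) * esnPdf α τ z =
      (zeta1 τ / Real.sqrt (α ^ 2 + 1)) *
        ∫ v : ℝ, f ((v - α * τ) / Real.sqrt (1 + α ^ 2)) * phi v := by
  set s := Real.sqrt (1 + α ^ 2) with hs_def
  have hs_pos : 0 < s := Real.sqrt_pos.mpr (by positivity)
  have hs' : Real.sqrt (α ^ 2 + 1) = s := by rw [hs_def, add_comm]
  -- pointwise rewrite of LHS integrand
  have hpt : ∀ z : ℝ, f z * zeta1 (τ * s + α * z) * esnPdf α τ z =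
      zeta1 τ * (f z * phi (s * z + α * τ)) := by
    intro z
    unfold zeta1 esnPdf
    have h1 := (Phi_pos (τ * s + α * z)).ne'
    have h2 := (Phi_pos τ).ne'
    field_simp
    rw [hs_def, mul_comm τ α]
    linear_combination (f z * Phi (τ * Real.sqrt (1 + α ^ 2) + α * z)) *
      phi_mul_phi α τ z
  simp_rw [hpt]
  rw [integral_const_mul, hs']
  -- change of variables
  have key : ∫ z : ℝ, f z * phi (s * z + α * τ) =
      s⁻¹ * ∫ v : ℝ, f ((v - α * τ) / s) * phi v := by
    set G : ℝ → ℝ := fun v => f ((v - α * τ) / s) * phi v with hG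
    have H : ∀ z : ℝ, f z * phi (s * z + α * τ) = G (s * z + α * τ) := by
      intro z
      rw [hG]
      simp only []
      congr 2
      field_simp
      ring
    simp_rw [H]
    have h2 : ∫ z : ℝ, G (s * z + α * τ) = ∫ z : ℝ, (fun x => G (x + α * τ)) (s * z) := rfl
    rw [h2, MeasureTheory.Measure.integral_comp_mul_left (fun x => G (x + α * τ)) s,
      integral_add_right_eq_self G (α * τ), abs_of_pos (inv_pos.mpr hs_pos), smul_eq_mul]
  rw [key]
  ring
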